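/- arXiv:1004.1947 — 5 statements merged into one kernel-verified Lean document; each statement's English description precedes it below -/
import Mathlib

section
/- Let E be a branch (a set of normal formulas) and α a sort. If E contains exactly n disequations between terms of type α, then there are at most 2^n α-discriminants. If E contains no disequation at α, the empty set is the unique α-discriminant. -/
/-- Simple types of STT: the type `o` of truth values is `base 0`, sorts are `base (α+1)`. -/
inductive Ty : Type
  | base : ℕ → Ty
  | arr : Ty → Ty → Ty
  deriving DecidableEq

abbrev Ty.o : Ty := Ty.base 0
abbrev Ty.sort (α : ℕ) : Ty := Ty.base (α + 1)

/-- Terms of STT: variables, negation, primitive equality at every type, application,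
lambda abstraction. -/
inductive Tm : Ty → Type
  | var : ℕ → (σ : Ty) → Tm σ
  | neg : Tm (Ty.arr Ty.o Ty.o)
  | eq : (σ : Ty) → Tm (Ty.arr σ (Ty.arr σ Ty.o))
  | app : ∀ {σ τ : Ty}, Tm (Ty.arr σ τ) → Tm σ → Tm τ
  | lam : ℕ → (σ : Ty) → ∀ {τ : Ty}, Tm τ → Tm (Ty.arr σ τ)

def Tm.Not (s : Tm Ty.o) : Tm Ty.o := Tm.app Tm.neg s
def Tm.Eqn {σ : Ty} (s t : Tm σ) : Tm Ty.o := Tm.app (Tm.app (Tm.eq σ) s) t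
def Tm.Diseq {σ : Ty} (s t : Tm σ) : Tm Ty.o := Tm.Not (Tm.Eqn s t)

/-- Argument lists (spines): `Args σ ρ` turns a head of type `σ` into a term of type `ρ`. -/
inductive Args : Ty → Ty → Type
  | nil : ∀ {ρ}, Args ρ ρ
  | cons : ∀ {σ τ ρ}, Tm σ → Args τ ρ → Args (Ty.arr σ τ) ρ

def applyArgs : ∀ {σ ρ : Ty}, Tm σ → Args σ ρ → Tm ρ
  | _, _, s, Args.nil => s
  | _, _, s, Args.cons t a => applyArgs (Tm.app s t) a

def nfArgs (f : (σ : Ty) → Tm σ → Tm σ) : ∀ {σ ρ : Ty}, Args σ ρ → Args σ ρ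
  | _, _, Args.nil => Args.nil
  | _, _, Args.cons t a => Args.cons (f _ t) (nfArgs f a)

/-- Pairs of equi-typed argument lists `s₁ … sₙ` and `t₁ … tₙ`. -/
inductive Args2 : Ty → Ty → Type
  | nil : ∀ {ρ}, Args2 ρ ρ
  | cons : ∀ {σ τ ρ}, Tm σ → Tm σ → Args2 τ ρ → Args2 (Ty.arr σ τ) ρ

def Args2.left : ∀ {σ ρ}, Args2 σ ρ → Args σ ρ
  | _, _, Args2.nil => Args.nil
  | _, _, Args2.cons s _ p => Args.cons s (Args2.left p)

def Args2.right : ∀ {σ ρ}, Args2 σ ρ → Args σ ρ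
  | _, _, Args2.nil => Args.nil
  | _, _, Args2.cons _ t p => Args.cons t (Args2.right p)

/-- The list of disequations `sᵢ ≠ tᵢ` of a pair of argument lists. -/
def Args2.diseqs : ∀ {σ ρ}, Args2 σ ρ → List (Tm Ty.o)
  | _, _, Args2.nil => []
  | _, _, Args2.cons s t p => Tm.Diseq s t :: Args2.diseqs p

/-- Atomic heads: names (variables and the logical constants). -/
inductive Atomic : ∀ {σ : Ty}, Tm σ → Prop
  | var : ∀ n σ, Atomic (Tm.var n σ)
  | neg : Atomic Tm.neg
  | eq : ∀ σ, Atomic (Tm.eq σ)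

/-- Update a substitution at the name `(x, σ0)`. -/
def updS (θ : ℕ → (σ : Ty) → Option (Tm σ)) (x : ℕ) (σ0 : Ty) (t : Tm σ0) :
    ℕ → (σ : Ty) → Option (Tm σ) := fun n σ =>
  if h : n = x ∧ σ = σ0 then some (h.2.symm ▸ t) else θ n σ

/-- A normalization operator with an accompanying substitution operation,
satisfying N1–N3 and S1–S4. -/
structure NormOp : Type where
  nf : ∀ {σ : Ty}, Tm σ → Tm σ
  sub : (ℕ → (σ : Ty) → Option (Tm σ)) → ∀ {σ : Ty}, Tm σ → Tm σ
  n1 : ∀ {σ : Ty} (s : Tm σ), nf (nf s) = nf s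
  n2 : ∀ {σ τ : Ty} (s : Tm (Ty.arr σ τ)) (t : Tm σ), nf (Tm.app (nf s) t) = nf (Tm.app s t)
  n3 : ∀ {σ : Ty} {β : ℕ} (h : Tm σ), Atomic h → ∀ a : Args σ (Ty.base β),
      nf (applyArgs h a) = applyArgs h (nfArgs (fun _ s => nf s) a)
  s1 : ∀ θ (n : ℕ) (σ : Ty), sub θ (Tm.var n σ) = (θ n σ).getD (Tm.var n σ)
  s1neg : ∀ θ, sub θ Tm.neg = Tm.neg
  s1eq : ∀ θ (σ : Ty), sub θ (Tm.eq σ) = Tm.eq σ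
  s2 : ∀ θ {σ τ : Ty} (s : Tm (Ty.arr σ τ)) (t : Tm σ),
      sub θ (Tm.app s t) = Tm.app (sub θ s) (sub θ t)
  s3 : ∀ θ (x : ℕ) (σ : Ty) {τ : Ty} (s : Tm τ) (t : Tm σ),
      nf (Tm.app (sub θ (Tm.lam x σ s)) t) = nf (sub (updS θ x σ t) s)
  s4 : ∀ {σ : Ty} (s : Tm σ), nf (sub (fun _ _ => none) s) = nf s

/-- The evidence conditions for a branch `E`. -/
structure Evident (Ω : NormOp) (E : Set (Tm Ty.o)) : Prop where
  dn : ∀ s : Tm Ty.o, Tm.Not (Tm.Not s) ∈ E → s ∈ E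
  bq : ∀ s t : Tm Ty.o, Tm.Eqn s t ∈ E → (s ∈ E ∧ t ∈ E) ∨ (Tm.Not s ∈ E ∧ Tm.Not t ∈ E)
  be : ∀ s t : Tm Ty.o, Tm.Diseq s t ∈ E → (s ∈ E ∧ Tm.Not t ∈ E) ∨ (Tm.Not s ∈ E ∧ t ∈ E)
  fq : ∀ {σ τ : Ty} (s t : Tm (Ty.arr σ τ)), Tm.Eqn s t ∈ E → ∀ u : Tm σ, Ω.nf u = u →
      Tm.Eqn (Ω.nf (Tm.app s u)) (Ω.nf (Tm.app t u)) ∈ E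
  fe : ∀ {σ τ : Ty} (s t : Tm (Ty.arr σ τ)), Tm.Diseq s t ∈ E →
      ∃ x : ℕ, Tm.Diseq (Ω.nf (Tm.app s (Tm.var x σ))) (Ω.nf (Tm.app t (Tm.var x σ))) ∈ E
  mat : ∀ {σ : Ty} (x : ℕ) (p : Args2 σ Ty.o),
      applyArgs (Tm.var x σ) p.left ∈ E → Tm.Not (applyArgs (Tm.var x σ) p.right) ∈ E →
      ∃ d ∈ p.diseqs, d ∈ E
  dec : ∀ {σ : Ty} {α : ℕ} (x : ℕ) (p : Args2 σ (Ty.sort α)),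
      Tm.Diseq (applyArgs (Tm.var x σ) p.left) (applyArgs (Tm.var x σ) p.right) ∈ E →
      ∃ d ∈ p.diseqs, d ∈ E
  con : ∀ {α : ℕ} (s t u v : Tm (Ty.sort α)), Tm.Eqn s t ∈ E → Tm.Diseq u v ∈ E →
      (Tm.Diseq s u ∈ E ∧ Tm.Diseq t u ∈ E) ∨ (Tm.Diseq s v ∈ E ∧ Tm.Diseq t v ∈ E)

/-- A term `u` is discriminating in `E` if it occurs on one side of a disequation in `E`. -/
def Discriminating (E : Set (Tm Ty.o)) {σ : Ty} (u : Tm σ) : Prop :=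
  ∃ t : Tm σ, Tm.Diseq u t ∈ E ∨ Tm.Diseq t u ∈ E

/-- An `α`-discriminant: a maximal set of `α`-discriminating terms no two of which are
related by a disequation in `E`. -/
def IsDiscriminant (E : Set (Tm Ty.o)) (α : ℕ) (a : Set (Tm (Ty.sort α))) : Prop :=
  (∀ u ∈ a, Discriminating E u) ∧
  (∀ s ∈ a, ∀ t ∈ a, Tm.Diseq s t ∉ E) ∧
  (∀ b : Set (Tm (Ty.sort α)), a ⊆ b → (∀ u ∈ b, Discriminating E u) →
    (∀ s ∈ b, ∀ t ∈ b, Tm.Diseq s t ∉ E) → b = a)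

/-- `s # t`: the disequation `s ≠ t` or `t ≠ s` belongs to `E`. -/
def hashE (E : Set (Tm Ty.o)) {σ : Ty} (s t : Tm σ) : Prop :=
  Tm.Diseq s t ∈ E ∨ Tm.Diseq t s ∈ E

/-- Compatibility of two terms relative to an evident branch, by induction on types. -/
def compat (Ω : NormOp) (E : Set (Tm Ty.o)) : (σ : Ty) → Tm σ → Tm σ → Prop
  | Ty.base 0 => fun s t =>
      ¬(Ω.nf s ∈ E ∧ Tm.Not (Ω.nf t) ∈ E) ∧ ¬(Tm.Not (Ω.nf s) ∈ E ∧ Ω.nf t ∈ E)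
  | Ty.base (α + 1) => fun s t => ¬ hashE E (Ω.nf s) (Ω.nf t)
  | Ty.arr σ τ => fun s t => ∀ u v : Tm σ, compat Ω E σ u v →
      compat Ω E τ (Tm.app s u) (Tm.app t v)

/-- `ExistsPairHashNf Ω E p` holds if `[sᵢ] # [tᵢ]` for some position `i` of `p`. -/
def ExistsPairHashNf (Ω : NormOp) (E : Set (Tm Ty.o)) : ∀ {σ ρ : Ty}, Args2 σ ρ → Prop
  | _, _, Args2.nil => False
  | _, _, Args2.cons s t p => hashE E (Ω.nf s) (Ω.nf t) ∨ ExistsPairHashNf Ω E p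

/-- The value system of an evident branch `E`: at `o` the values are booleans, at a sort the
values are `α`-discriminants, and at function types the logical-relation clause is used. -/
def sem (Ω : NormOp) (E : Set (Tm Ty.o)) : (σ : Ty) → (A : Type) × (Tm σ → A → Prop)
  | Ty.base 0 => ⟨Bool, fun s b => if b then Tm.Not (Ω.nf s) ∉ E else Ω.nf s ∉ E⟩
  | Ty.base (α + 1) => ⟨Set (Tm (Ty.sort α)), fun s a =>
      IsDiscriminant E α a ∧ (Discriminating E (Ω.nf s) → Ω.nf s ∈ a)⟩
  | Ty.arr σ τ =>
      ⟨{x : (sem Ω E σ).1 // ∃ t : Tm σ, (sem Ω E σ).2 t x} → (sem Ω E τ).1,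
       fun s f => ∀ (t : Tm σ) (x : (sem Ω E σ).1) (h : (sem Ω E σ).2 t x),
         (sem Ω E τ).2 (Tm.app s t) (f ⟨x, t, h⟩)⟩

/-- An applicative structure for STT: nonempty domains, `D(στ)` a set of functions
`D(σ) → D(τ)` (extensionality), `D(o) = {0,1}`, together with an assignment for the
variables and logical values for `¬` and `=_σ`. -/
structure Struc : Type 1 where
  D : Ty → Type
  ap : ∀ {σ τ : Ty}, D (Ty.arr σ τ) → D σ → D τ
  ext : ∀ {σ τ : Ty} (f g : D (Ty.arr σ τ)), (∀ a : D σ, ap f a = ap g a) → f = g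
  ne : ∀ σ : Ty, Nonempty (D σ)
  I : ℕ → ∀ σ : Ty, D σ
  bo : D Ty.o ≃ Bool
  negv : D (Ty.arr Ty.o Ty.o)
  eqv : ∀ σ : Ty, D (Ty.arr σ (Ty.arr σ Ty.o))
  hneg : ∀ b : D Ty.o, ap negv b = bo.symm (!(bo b))
  heq : ∀ {σ : Ty} (a b : D σ), ap (ap (eqv σ) a) b = bo.symm true ↔ a = b

/-- Update the assignment of a structure at the name `(m, σ0)`. -/
def updD (M : Struc) (I : ℕ → ∀ σ, M.D σ) (m : ℕ) (σ0 : Ty) (a : M.D σ0) :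
    ℕ → ∀ σ, M.D σ := fun n σ =>
  if h : n = m ∧ σ = σ0 then (h.2.symm ▸ a) else I n σ

/-- The evaluation relation of a logical structure. -/
inductive Eval (M : Struc) : (ℕ → ∀ σ, M.D σ) → ∀ σ : Ty, Tm σ → M.D σ → Prop
  | var : ∀ (I : ℕ → ∀ σ, M.D σ) (n : ℕ) (σ : Ty), Eval M I σ (Tm.var n σ) (I n σ)
  | neg : ∀ I : ℕ → ∀ σ, M.D σ, Eval M I (Ty.arr Ty.o Ty.o) Tm.neg M.negv
  | eq : ∀ (I : ℕ → ∀ σ, M.D σ) (σ : Ty), Eval M I (Ty.arr σ (Ty.arr σ Ty.o)) (Tm.eq σ) (M.eqv σ)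
  | app : ∀ {I : ℕ → ∀ σ, M.D σ} {σ τ : Ty} {s : Tm (Ty.arr σ τ)} {t : Tm σ}
      {f : M.D (Ty.arr σ τ)} {a : M.D σ},
      Eval M I (Ty.arr σ τ) s f → Eval M I σ t a → Eval M I τ (Tm.app s t) (M.ap f a)
  | lam : ∀ {I : ℕ → ∀ σ, M.D σ} (n : ℕ) (σ : Ty) {τ : Ty} (s : Tm τ) (f : M.D (Ty.arr σ τ)),
      (∀ a : M.D σ, Eval M (updD M I n σ a) τ s (M.ap f a)) →
      Eval M I (Ty.arr σ τ) (Tm.lam n σ s) f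

/-- A logical interpretation: a logical structure whose evaluation is total. -/
structure Interp : Type 1 extends Struc where
  total : ∀ (σ : Ty) (s : Tm σ), ∃ a : toStruc.D σ, Eval toStruc toStruc.I σ s a

/-- `M` is a model of the set of formulas `E`. -/
def Satisfies (M : Interp) (E : Set (Tm Ty.o)) : Prop :=
  ∀ s ∈ E, Eval M.toStruc M.I Ty.o s (M.bo.symm true)

/-- A surjective interpretation: every value is denoted by some term. -/
def Surj (M : Interp) : Prop :=
  ∀ (σ : Ty) (a : M.D σ), ∃ s : Tm σ, Eval M.toStruc M.I σ s a

/-- A complete branch: contains `s` or `¬s` for every normal formula `s`. -/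
def CompleteBranch (Ω : NormOp) (E : Set (Tm Ty.o)) : Prop :=
  ∀ s : Tm Ty.o, Ω.nf s = s → s ∈ E ∨ Tm.Not s ∈ E

/-- The abstract consistency conditions on a set of branches `Γ`. -/
structure ACC (Ω : NormOp) (Γ : Set (Set (Tm Ty.o))) : Prop where
  dn : ∀ A ∈ Γ, ∀ s : Tm Ty.o, Tm.Not (Tm.Not s) ∈ A → insert s A ∈ Γ
  bq : ∀ A ∈ Γ, ∀ s t : Tm Ty.o, Tm.Eqn s t ∈ A →
      insert s (insert t A) ∈ Γ ∨ insert (Tm.Not s) (insert (Tm.Not t) A) ∈ Γ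
  be : ∀ A ∈ Γ, ∀ s t : Tm Ty.o, Tm.Diseq s t ∈ A →
      insert s (insert (Tm.Not t) A) ∈ Γ ∨ insert (Tm.Not s) (insert t A) ∈ Γ
  fq : ∀ A ∈ Γ, ∀ {σ τ : Ty} (s t : Tm (Ty.arr σ τ)), Tm.Eqn s t ∈ A → ∀ u : Tm σ, Ω.nf u = u →
      insert (Tm.Eqn (Ω.nf (Tm.app s u)) (Ω.nf (Tm.app t u))) A ∈ Γ
  fe : ∀ A ∈ Γ, ∀ {σ τ : Ty} (s t : Tm (Ty.arr σ τ)), Tm.Diseq s t ∈ A →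
      ∃ x : ℕ, insert (Tm.Diseq (Ω.nf (Tm.app s (Tm.var x σ))) (Ω.nf (Tm.app t (Tm.var x σ)))) A ∈ Γ
  mat : ∀ A ∈ Γ, ∀ {σ : Ty} (x : ℕ) (p : Args2 σ Ty.o),
      applyArgs (Tm.var x σ) p.left ∈ A → Tm.Not (applyArgs (Tm.var x σ) p.right) ∈ A →
      ∃ d ∈ p.diseqs, insert d A ∈ Γ
  dec : ∀ A ∈ Γ, ∀ {σ : Ty} {α : ℕ} (x : ℕ) (p : Args2 σ (Ty.sort α)),
      Tm.Diseq (applyArgs (Tm.var x σ) p.left) (applyArgs (Tm.var x σ) p.right) ∈ A →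
      ∃ d ∈ p.diseqs, insert d A ∈ Γ
  con : ∀ A ∈ Γ, ∀ {α : ℕ} (s t u v : Tm (Ty.sort α)), Tm.Eqn s t ∈ A → Tm.Diseq u v ∈ A →
      insert (Tm.Diseq s u) (insert (Tm.Diseq t u) A) ∈ Γ ∨
      insert (Tm.Diseq s v) (insert (Tm.Diseq t v) A) ∈ Γ

/-- A complete abstract consistency class. -/
def CompleteACC (Ω : NormOp) (Γ : Set (Set (Tm Ty.o))) : Prop :=
  ∀ A ∈ Γ, ∀ s : Tm Ty.o, Ω.nf s = s → insert s A ∈ Γ ∨ insert (Tm.Not s) A ∈ Γ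

/-- Free occurrence of the name `(x, μ)` in a term. -/
def FreeIn (x : ℕ) (μ : Ty) : ∀ {σ : Ty}, Tm σ → Prop
  | _, Tm.var n σ => x = n ∧ μ = σ
  | _, Tm.app s t => FreeIn x μ s ∨ FreeIn x μ t
  | _, Tm.lam n σ s => ¬(x = n ∧ μ = σ) ∧ FreeIn x μ s
  | _, _ => False

/-- A closed branch: contains `x` and `¬x` for a variable `x : o`, or `x ≠ x` at a sort. -/
def ClosedB (A : Set (Tm Ty.o)) : Prop :=
  (∃ x : ℕ, Tm.var x Ty.o ∈ A ∧ Tm.Not (Tm.var x Ty.o) ∈ A) ∨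
  (∃ (α : ℕ) (x : ℕ), Tm.Diseq (Tm.var x (Ty.sort α)) (Tm.var x (Ty.sort α)) ∈ A)

/-- Refutability in the cut-free tableau calculus `T` for STT, with the restrictions that
rules are applied only to non-closed branches and functional extensionality is applied only
once per disequation. -/
inductive Refutable (Ω : NormOp) : Set (Tm Ty.o) → Prop
  | closed : ∀ {A : Set (Tm Ty.o)}, ClosedB A → Refutable Ω A
  | dn : ∀ {A : Set (Tm Ty.o)} {s : Tm Ty.o}, ¬ClosedB A → Tm.Not (Tm.Not s) ∈ A →
      Refutable Ω (insert s A) → Refutable Ω A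
  | bq : ∀ {A : Set (Tm Ty.o)} (s t : Tm Ty.o), ¬ClosedB A → Tm.Eqn s t ∈ A →
      Refutable Ω (insert s (insert t A)) →
      Refutable Ω (insert (Tm.Not s) (insert (Tm.Not t) A)) → Refutable Ω A
  | be : ∀ {A : Set (Tm Ty.o)} (s t : Tm Ty.o), ¬ClosedB A → Tm.Diseq s t ∈ A →
      Refutable Ω (insert s (insert (Tm.Not t) A)) →
      Refutable Ω (insert (Tm.Not s) (insert t A)) → Refutable Ω A
  | fq : ∀ {A : Set (Tm Ty.o)} {σ τ : Ty} (s t : Tm (Ty.arr σ τ)) (u : Tm σ), ¬ClosedB A →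
      Tm.Eqn s t ∈ A → Ω.nf u = u →
      Refutable Ω (insert (Tm.Eqn (Ω.nf (Tm.app s u)) (Ω.nf (Tm.app t u))) A) → Refutable Ω A
  | fe : ∀ {A : Set (Tm Ty.o)} {σ τ : Ty} (s t : Tm (Ty.arr σ τ)) (x : ℕ), ¬ClosedB A →
      Tm.Diseq s t ∈ A → (∀ u ∈ A, ¬ FreeIn x σ u) →
      (¬∃ y : ℕ, Tm.Diseq (Ω.nf (Tm.app s (Tm.var y σ))) (Ω.nf (Tm.app t (Tm.var y σ))) ∈ A) →
      Refutable Ω (insert (Tm.Diseq (Ω.nf (Tm.app s (Tm.var x σ))) (Ω.nf (Tm.app t (Tm.var x σ)))) A) →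
      Refutable Ω A
  | mat : ∀ {A : Set (Tm Ty.o)} {σ : Ty} (x : ℕ) (p : Args2 σ Ty.o), ¬ClosedB A →
      applyArgs (Tm.var x σ) p.left ∈ A → Tm.Not (applyArgs (Tm.var x σ) p.right) ∈ A →
      (∀ d ∈ p.diseqs, Refutable Ω (insert d A)) → Refutable Ω A
  | dec : ∀ {A : Set (Tm Ty.o)} {σ : Ty} {α : ℕ} (x : ℕ) (p : Args2 σ (Ty.sort α)), ¬ClosedB A →
      Tm.Diseq (applyArgs (Tm.var x σ) p.left) (applyArgs (Tm.var x σ) p.right) ∈ A →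
      (∀ d ∈ p.diseqs, Refutable Ω (insert d A)) → Refutable Ω A
  | con : ∀ {A : Set (Tm Ty.o)} {α : ℕ} (s t u v : Tm (Ty.sort α)), ¬ClosedB A →
      Tm.Eqn s t ∈ A → Tm.Diseq u v ∈ A →
      Refutable Ω (insert (Tm.Diseq s u) (insert (Tm.Diseq t u) A)) →
      Refutable Ω (insert (Tm.Diseq s v) (insert (Tm.Diseq t v) A)) → Refutable Ω A

/-- If `E` contains exactly `n` disequations at the sort `α`, then there are at
most `2^n` `α`-discriminants; if it contains none, `∅` is the unique `α`-discriminant. -/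
theorem stmt5 (Ω : NormOp) (E : Set (Tm Ty.o)) (hnorm : ∀ s ∈ E, Ω.nf s = s)
    (α : ℕ) (n : ℕ) :
    ((Set.Finite {p : Tm (Ty.sort α) × Tm (Ty.sort α) | Tm.Diseq p.1 p.2 ∈ E} ∧
      Set.ncard {p : Tm (Ty.sort α) × Tm (Ty.sort α) | Tm.Diseq p.1 p.2 ∈ E} = n) →
      Set.Finite {a : Set (Tm (Ty.sort α)) | IsDiscriminant E α a} ∧
      Set.ncard {a : Set (Tm (Ty.sort α)) | IsDiscriminant E α a} ≤ 2 ^ n) ∧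
    ((∀ s t : Tm (Ty.sort α), Tm.Diseq s t ∉ E) →
      {a : Set (Tm (Ty.sort α)) | IsDiscriminant E α a} = {∅}) := by
  classical
  constructor
  · rintro ⟨hD, hn⟩
    have hinj : ∀ a b : Set (Tm (Ty.sort α)), IsDiscriminant E α a → IsDiscriminant E α b →
        (∀ s t : Tm (Ty.sort α), Tm.Diseq s t ∈ E → (s ∈ a ↔ s ∈ b)) → a = b := by
      intro a b ha hb hf
      have hab : ∀ s ∈ a ∪ b, ∀ t ∈ a ∪ b, Tm.Diseq s t ∉ E := by
        intro s hs t ht hst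
        rcases hs with hs | hs <;> rcases ht with ht | ht
        · exact ha.2.1 s hs t ht hst
        · exact hb.2.1 s ((hf s t hst).1 hs) t ht hst
        · exact ha.2.1 s ((hf s t hst).2 hs) t ht hst
        · exact hb.2.1 s hs t ht hst
      have hdisc : ∀ u ∈ a ∪ b, Discriminating E u := by
        intro u hu
        rcases hu with h | h
        · exact ha.1 u h
        · exact hb.1 u h
      have h1 := ha.2.2 (a ∪ b) Set.subset_union_left hdisc hab
      have h2 := hb.2.2 (a ∪ b) Set.subset_union_right hdisc hab
      exact h1.symm.trans h2
    haveI := hD.fintype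
    set D := {p : Tm (Ty.sort α) × Tm (Ty.sort α) | Tm.Diseq p.1 p.2 ∈ E} with hDdef
    set F : {a : Set (Tm (Ty.sort α)) | IsDiscriminant E α a} → (D → Prop) :=
      fun a p => (p : Tm (Ty.sort α) × Tm (Ty.sort α)).1 ∈ (a : Set (Tm (Ty.sort α)))
      with hF
    have hFinj : Function.Injective F := by
      intro a b h
      apply Subtype.ext
      apply hinj _ _ a.2 b.2
      intro s t hst
      have := congrFun h ⟨(s, t), hst⟩
      simp only [hF] at this
      rw [this]
    have hfin : Finite {a : Set (Tm (Ty.sort α)) | IsDiscriminant E α a} :=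
      Finite.of_injective F hFinj
    refine ⟨Set.finite_coe_iff.mp hfin, ?_⟩
    have hle : Nat.card {a : Set (Tm (Ty.sort α)) | IsDiscriminant E α a} ≤
        Nat.card (D → Prop) := Nat.card_le_card_of_injective F hFinj
    rw [← Nat.card_coe_set_eq]
    calc Nat.card {a : Set (Tm (Ty.sort α)) | IsDiscriminant E α a}
        ≤ Nat.card (D → Prop) := hle
      _ = 2 ^ n := by
          rw [Nat.card_eq_fintype_card, Fintype.card_fun, Fintype.card_prop]
          congr 1
          rw [← hn, ← Nat.card_coe_set_eq, Nat.card_eq_fintype_card]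
  · intro hno
    ext a
    simp only [Set.mem_setOf_eq, Set.mem_singleton_iff]
    constructor
    · intro ha
      ext u
      simp only [Set.mem_empty_iff_false, iff_false]
      intro hu
      obtain ⟨t, ht | ht⟩ := ha.1 u hu
      · exact hno u t ht
      · exact hno t u ht
    · rintro rfl
      refine ⟨by simp, by simp, ?_⟩
      intro b _ hb _
      ext u
      simp only [Set.mem_empty_iff_false, iff_false]
      intro hu
      obtain ⟨t, ht | ht⟩ := hb u hu
      · exact hno u t ht
      · exact hno t u ht
end

section
/- Let E be an evident branch and let a, b be distinct α-discriminants. Then (1) there exist s ∈ a and t ∈ b with s ≠ t or t ≠ s in E, and (2) there are no s ∈ a, t ∈ b such that the equation s =_α t is in E. -/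
/-- Distinct `α`-discriminants of an evident branch are separated by a
disequation in `E` and are not connected by an equation in `E`. -/
theorem stmt6 (Ω : NormOp) (E : Set (Tm Ty.o)) (hE : Evident Ω E)
    (hnorm : ∀ s ∈ E, Ω.nf s = s) (α : ℕ) (a b : Set (Tm (Ty.sort α)))
    (ha : IsDiscriminant E α a) (hb : IsDiscriminant E α b) (hab : a ≠ b) :
    (∃ s ∈ a, ∃ t ∈ b, hashE E s t) ∧ ¬ ∃ s ∈ a, ∃ t ∈ b, Tm.Eqn s t ∈ E := by
  obtain ⟨haD, haN, haM⟩ := ha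
  obtain ⟨hbD, hbN, hbM⟩ := hb
  have part1 : ∃ s ∈ a, ∃ t ∈ b, hashE E s t := by
    by_contra h
    push_neg at h
    have hno : ∀ s ∈ a ∪ b, ∀ t ∈ a ∪ b, Tm.Diseq s t ∉ E := by
      intro s hs t ht
      rcases hs with hs | hs <;> rcases ht with ht | ht
      · exact haN s hs t ht
      · intro hd; exact h s hs t ht (Or.inl hd)
      · intro hd; exact h t ht s hs (Or.inr hd)
      · exact hbN s hs t ht
    have hd : ∀ u ∈ a ∪ b, Discriminating E u := by
      intro u hu; rcases hu with h' | h'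
      exacts [haD u h', hbD u h']
    have h1 := haM (a ∪ b) Set.subset_union_left hd hno
    have h2 := hbM (a ∪ b) Set.subset_union_right hd hno
    exact hab (h1.symm.trans h2)
  refine ⟨part1, ?_⟩
  rintro ⟨s, hs, t, ht, heq⟩
  obtain ⟨s', hs', t', ht', hh⟩ := part1
  rcases hh with hd | hd
  · rcases hE.con s t s' t' heq hd with ⟨h1, _⟩ | ⟨_, h2⟩
    · exact haN s hs s' hs' h1
    · exact hbN t ht t' ht' h2
  · rcases hE.con s t t' s' heq hd with ⟨_, h2⟩ | ⟨h1, _⟩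
    · exact hbN t ht t' ht' h2
    · exact haN s hs s' hs' h1
end

section
/- Let E be an evident branch. For all types σ: (1) no two terms s, t of type σ are both compatible (s ∼_σ t) and have [s] # [t]; and (2) for any variable x and equi-typed argument lists, either x s₁…sₙ ∼_σ x t₁…tₙ or [sᵢ] # [tᵢ] for some i. -/
/-- Normalize both sides of a pair of argument lists. -/
def nf2 (Ω : NormOp) : ∀ {σ ρ : Ty}, Args2 σ ρ → Args2 σ ρ
  | _, _, Args2.nil => Args2.nil
  | _, _, Args2.cons s t p => Args2.cons (Ω.nf s) (Ω.nf t) (nf2 Ω p)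

/-- Normalize and swap both sides of a pair of argument lists. -/
def nf2swap (Ω : NormOp) : ∀ {σ ρ : Ty}, Args2 σ ρ → Args2 σ ρ
  | _, _, Args2.nil => Args2.nil
  | _, _, Args2.cons s t p => Args2.cons (Ω.nf t) (Ω.nf s) (nf2swap Ω p)

theorem nf2_left (Ω : NormOp) : ∀ {σ ρ : Ty} (p : Args2 σ ρ),
    (nf2 Ω p).left = nfArgs (fun _ s => Ω.nf s) p.left
  | _, _, Args2.nil => rfl
  | _, _, Args2.cons s t p => by simp [nf2, Args2.left, nfArgs, nf2_left Ω p]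

theorem nf2_right (Ω : NormOp) : ∀ {σ ρ : Ty} (p : Args2 σ ρ),
    (nf2 Ω p).right = nfArgs (fun _ s => Ω.nf s) p.right
  | _, _, Args2.nil => rfl
  | _, _, Args2.cons s t p => by simp [nf2, Args2.right, nfArgs, nf2_right Ω p]

theorem nf2swap_left (Ω : NormOp) : ∀ {σ ρ : Ty} (p : Args2 σ ρ),
    (nf2swap Ω p).left = nfArgs (fun _ s => Ω.nf s) p.right
  | _, _, Args2.nil => rfl
  | _, _, Args2.cons s t p => by simp [nf2swap, Args2.left, Args2.right, nfArgs, nf2swap_left Ω p]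

theorem nf2swap_right (Ω : NormOp) : ∀ {σ ρ : Ty} (p : Args2 σ ρ),
    (nf2swap Ω p).right = nfArgs (fun _ s => Ω.nf s) p.left
  | _, _, Args2.nil => rfl
  | _, _, Args2.cons s t p => by simp [nf2swap, Args2.left, Args2.right, nfArgs, nf2swap_right Ω p]

theorem nf2_diseqs_mem (Ω : NormOp) (E : Set (Tm Ty.o)) :
    ∀ {σ ρ : Ty} (p : Args2 σ ρ) (d : Tm Ty.o), d ∈ (nf2 Ω p).diseqs → d ∈ E →
      ExistsPairHashNf Ω E p
  | _, _, Args2.nil, d, hd, _ => by simp [nf2, Args2.diseqs] at hd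
  | _, _, Args2.cons s t p, d, hd, hdE => by
    simp only [nf2, Args2.diseqs, List.mem_cons] at hd
    rcases hd with rfl | hd
    · exact Or.inl (Or.inl hdE)
    · exact Or.inr (nf2_diseqs_mem Ω E p d hd hdE)

theorem nf2swap_diseqs_mem (Ω : NormOp) (E : Set (Tm Ty.o)) :
    ∀ {σ ρ : Ty} (p : Args2 σ ρ) (d : Tm Ty.o), d ∈ (nf2swap Ω p).diseqs → d ∈ E →
      ExistsPairHashNf Ω E p
  | _, _, Args2.nil, d, hd, _ => by simp [nf2swap, Args2.diseqs] at hd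
  | _, _, Args2.cons s t p, d, hd, hdE => by
    simp only [nf2swap, Args2.diseqs, List.mem_cons] at hd
    rcases hd with rfl | hd
    · exact Or.inl (Or.inr hdE)
    · exact Or.inr (nf2swap_diseqs_mem Ω E p d hd hdE)

/-- Append a pair of arguments at the end of a pair of argument lists. -/
def Args2.snoc : ∀ {σ μ ρ : Ty}, Args2 σ (Ty.arr μ ρ) → Tm μ → Tm μ → Args2 σ ρ
  | _, _, _, Args2.nil, u, v => Args2.cons u v Args2.nil
  | _, _, _, Args2.cons s t p, u, v => Args2.cons s t (p.snoc u v)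

theorem snoc_left_apply : ∀ {σ μ ρ : Ty} (p : Args2 σ (Ty.arr μ ρ)) (u v : Tm μ) (h : Tm σ),
    applyArgs h (p.snoc u v).left = Tm.app (applyArgs h p.left) u
  | _, _, _, Args2.nil, u, v, h => rfl
  | _, _, _, Args2.cons s t p, u, v, h => by
    simp only [Args2.snoc, Args2.left, applyArgs]
    exact snoc_left_apply p u v (Tm.app h s)

theorem snoc_right_apply : ∀ {σ μ ρ : Ty} (p : Args2 σ (Ty.arr μ ρ)) (u v : Tm μ) (h : Tm σ),
    applyArgs h (p.snoc u v).right = Tm.app (applyArgs h p.right) v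
  | _, _, _, Args2.nil, u, v, h => rfl
  | _, _, _, Args2.cons s t p, u, v, h => by
    simp only [Args2.snoc, Args2.right, applyArgs]
    exact snoc_right_apply p u v (Tm.app h t)

theorem snoc_hash (Ω : NormOp) (E : Set (Tm Ty.o)) :
    ∀ {σ μ ρ : Ty} (p : Args2 σ (Ty.arr μ ρ)) (u v : Tm μ),
      ExistsPairHashNf Ω E (p.snoc u v) →
      ExistsPairHashNf Ω E p ∨ hashE E (Ω.nf u) (Ω.nf v)
  | _, _, _, Args2.nil, u, v, h => by
    rcases h with h | h
    · exact Or.inr h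
    · exact absurd h id
  | _, _, _, Args2.cons s t p, u, v, h => by
    rcases h with h | h
    · exact Or.inl (Or.inl h)
    · rcases snoc_hash Ω E p u v h with h' | h'
      · exact Or.inl (Or.inr h')
      · exact Or.inr h'

/-- Compatibility Lemma: for every type `σ`, (1) no two terms of type `σ` are
both compatible and have `[s] # [t]`; (2) for any variable and equi-typed argument lists,
either the applications are compatible or `[sᵢ] # [tᵢ]` for some `i`. -/
theorem stmt7 (Ω : NormOp) (E : Set (Tm Ty.o)) (hE : Evident Ω E)
    (hnorm : ∀ s ∈ E, Ω.nf s = s) (σ : Ty) :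
    (∀ s t : Tm σ, ¬(compat Ω E σ s t ∧ hashE E (Ω.nf s) (Ω.nf t))) ∧
    (∀ (τ : Ty) (x : ℕ) (p : Args2 τ σ),
      compat Ω E σ (applyArgs (Tm.var x τ) p.left) (applyArgs (Tm.var x τ) p.right) ∨
      ExistsPairHashNf Ω E p) := by
  induction σ with
  | base n =>
    cases n with
    | zero =>
      constructor
      · rintro s t ⟨⟨h1, h2⟩, hd | hd⟩
        · rcases hE.be _ _ hd with ⟨a, b⟩ | ⟨a, b⟩
          · exact h1 ⟨a, b⟩
          · exact h2 ⟨a, b⟩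
        · rcases hE.be _ _ hd with ⟨a, b⟩ | ⟨a, b⟩
          · exact h2 ⟨b, a⟩
          · exact h1 ⟨b, a⟩
      · intro τ x p
        by_cases hp : ExistsPairHashNf Ω E p
        · exact Or.inr hp
        refine Or.inl ⟨?_, ?_⟩
        · rintro ⟨ha, hb⟩
          have ha' : applyArgs (Tm.var x τ) (nf2 Ω p).left ∈ E := by
            rw [nf2_left, ← Ω.n3 _ (Atomic.var x τ)]; exact ha
          have hb' : Tm.Not (applyArgs (Tm.var x τ) (nf2 Ω p).right) ∈ E := by
            rw [nf2_right, ← Ω.n3 _ (Atomic.var x τ)]; exact hb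
          obtain ⟨d, hd, hdE⟩ := hE.mat x (nf2 Ω p) ha' hb'
          exact hp (nf2_diseqs_mem Ω E p d hd hdE)
        · rintro ⟨ha, hb⟩
          have hb' : applyArgs (Tm.var x τ) (nf2swap Ω p).left ∈ E := by
            rw [nf2swap_left, ← Ω.n3 _ (Atomic.var x τ)]; exact hb
          have ha' : Tm.Not (applyArgs (Tm.var x τ) (nf2swap Ω p).right) ∈ E := by
            rw [nf2swap_right, ← Ω.n3 _ (Atomic.var x τ)]; exact ha
          obtain ⟨d, hd, hdE⟩ := hE.mat x (nf2swap Ω p) hb' ha'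
          exact hp (nf2swap_diseqs_mem Ω E p d hd hdE)
    | succ α =>
      constructor
      · rintro s t ⟨hc, hd⟩
        exact hc hd
      · intro τ x p
        by_cases hp : ExistsPairHashNf Ω E p
        · exact Or.inr hp
        refine Or.inl ?_
        rintro (hd | hd)
        · have hd' : Tm.Diseq (applyArgs (Tm.var x τ) (nf2 Ω p).left)
              (applyArgs (Tm.var x τ) (nf2 Ω p).right) ∈ E := by
            rw [nf2_left, nf2_right, ← Ω.n3 _ (Atomic.var x τ), ← Ω.n3 _ (Atomic.var x τ)]
            exact hd
          obtain ⟨d, hdm, hdE⟩ := hE.dec x (nf2 Ω p) hd'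
          exact hp (nf2_diseqs_mem Ω E p d hdm hdE)
        · have hd' : Tm.Diseq (applyArgs (Tm.var x τ) (nf2swap Ω p).left)
              (applyArgs (Tm.var x τ) (nf2swap Ω p).right) ∈ E := by
            rw [nf2swap_left, nf2swap_right, ← Ω.n3 _ (Atomic.var x τ),
              ← Ω.n3 _ (Atomic.var x τ)]
            exact hd
          obtain ⟨d, hdm, hdE⟩ := hE.dec x (nf2swap Ω p) hd'
          exact hp (nf2swap_diseqs_mem Ω E p d hdm hdE)
  | arr σ τ ihσ ihτ =>
    have hvar : ∀ y : ℕ, compat Ω E σ (Tm.var y σ) (Tm.var y σ) := by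
      intro y
      rcases ihσ.2 σ y Args2.nil with h | h
      · exact h
      · exact absurd h id
    constructor
    · rintro s t ⟨hc, hd | hd⟩
      · obtain ⟨y, hy⟩ := hE.fe (Ω.nf s) (Ω.nf t) hd
        rw [Ω.n2, Ω.n2] at hy
        exact ihτ.1 (Tm.app s (Tm.var y σ)) (Tm.app t (Tm.var y σ))
          ⟨hc _ _ (hvar y), Or.inl hy⟩
      · obtain ⟨y, hy⟩ := hE.fe (Ω.nf t) (Ω.nf s) hd
        rw [Ω.n2, Ω.n2] at hy
        exact ihτ.1 (Tm.app s (Tm.var y σ)) (Tm.app t (Tm.var y σ))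
          ⟨hc _ _ (hvar y), Or.inr hy⟩
    · intro ρ x p
      by_cases hp : ExistsPairHashNf Ω E p
      · exact Or.inr hp
      refine Or.inl ?_
      intro u v huv
      rcases ihτ.2 ρ x (p.snoc u v) with h | h
      · rwa [snoc_left_apply, snoc_right_apply] at h
      · rcases snoc_hash Ω E p u v h with h' | h'
        · exact absurd h' hp
        · exact absurd ⟨huv, h'⟩ (ihσ.1 u v)
end

section
/- Let E be an evident branch with its value system ≈. For every variable x:σ there exists a ∈ D(σ) with x ≈ a; in particular D(σ) is nonempty for every type σ. -/
/-! ### Auxiliary machinery for the proof of Statement 9 -/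

/-- Append one argument at the end of a spine. -/
def snocA : ∀ {σ μ ν : Ty}, Args σ (Ty.arr μ ν) → Tm μ → Args σ ν
  | _, _, _, Args.nil, t => Args.cons t Args.nil
  | _, _, _, Args.cons s a, t => Args.cons s (snocA a t)

/-- Append one pair at the end of a pair of spines. -/
def snocA2 : ∀ {σ μ ν : Ty}, Args2 σ (Ty.arr μ ν) → Tm μ → Tm μ → Args2 σ ν
  | _, _, _, Args2.nil, t, u => Args2.cons t u Args2.nil
  | _, _, _, Args2.cons s s' a, t, u => Args2.cons s s' (snocA2 a t u)

lemma applyArgs_snocA : ∀ {σ μ ν : Ty} (h : Tm σ) (a : Args σ (Ty.arr μ ν)) (t : Tm μ),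
    applyArgs h (snocA a t) = Tm.app (applyArgs h a) t
  | _, _, _, _, Args.nil, _ => rfl
  | _, _, _, h, Args.cons s a, t => applyArgs_snocA (Tm.app h s) a t

lemma snocA2_left : ∀ {σ μ ν : Ty} (r : Args2 σ (Ty.arr μ ν)) (t u : Tm μ),
    (snocA2 r t u).left = snocA r.left t
  | _, _, _, Args2.nil, _, _ => rfl
  | _, _, _, Args2.cons s s' a, t, u => by
      simp [snocA2, Args2.left, snocA, snocA2_left a t u]

lemma snocA2_right : ∀ {σ μ ν : Ty} (r : Args2 σ (Ty.arr μ ν)) (t u : Tm μ),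
    (snocA2 r t u).right = snocA r.right u
  | _, _, _, Args2.nil, _, _ => rfl
  | _, _, _, Args2.cons s s' a, t, u => by
      simp [snocA2, Args2.right, snocA, snocA2_right a t u]

lemma eph_snocA2 (Ω : NormOp) (E : Set (Tm Ty.o)) :
    ∀ {σ μ ν : Ty} (r : Args2 σ (Ty.arr μ ν)) (t u : Tm μ),
    ExistsPairHashNf Ω E (snocA2 r t u) → ExistsPairHashNf Ω E r ∨ hashE E (Ω.nf t) (Ω.nf u)
  | _, _, _, Args2.nil, t, u => by
      intro h
      rcases h with h | h
      · exact Or.inr h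
      · exact absurd h (by simp [ExistsPairHashNf])
  | _, _, _, Args2.cons s s' a, t, u => by
      intro h
      rcases h with h | h
      · exact Or.inl (Or.inl h)
      · rcases eph_snocA2 Ω E a t u h with h | h
        · exact Or.inl (Or.inr h)
        · exact Or.inr h

lemma eph_nil (Ω : NormOp) (E : Set (Tm Ty.o)) {ρ : Ty} :
    ¬ ExistsPairHashNf Ω E (Args2.nil (ρ := ρ)) := by
  simp [ExistsPairHashNf]

/-- Pairwise normalization of a pair of spines. -/
def nfA2 (Ω : NormOp) : ∀ {σ ρ : Ty}, Args2 σ ρ → Args2 σ ρ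
  | _, _, Args2.nil => Args2.nil
  | _, _, Args2.cons s t p => Args2.cons (Ω.nf s) (Ω.nf t) (nfA2 Ω p)

lemma nfA2_left (Ω : NormOp) : ∀ {σ ρ : Ty} (r : Args2 σ ρ),
    (nfA2 Ω r).left = nfArgs (fun _ s => Ω.nf s) r.left
  | _, _, Args2.nil => rfl
  | _, _, Args2.cons s t p => by simp [nfA2, Args2.left, nfArgs, nfA2_left Ω p]

lemma nfA2_right (Ω : NormOp) : ∀ {σ ρ : Ty} (r : Args2 σ ρ),
    (nfA2 Ω r).right = nfArgs (fun _ s => Ω.nf s) r.right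
  | _, _, Args2.nil => rfl
  | _, _, Args2.cons s t p => by simp [nfA2, Args2.right, nfArgs, nfA2_right Ω p]

lemma nfA2_diseqs (Ω : NormOp) (E : Set (Tm Ty.o)) : ∀ {σ ρ : Ty} (r : Args2 σ ρ),
    ∀ d ∈ (nfA2 Ω r).diseqs, d ∈ E → ExistsPairHashNf Ω E r
  | _, _, Args2.nil => by intro d hd; simp [nfA2, Args2.diseqs] at hd
  | _, _, Args2.cons s t p => by
      intro d hd hdE
      simp only [nfA2, Args2.diseqs, List.mem_cons] at hd
      rcases hd with rfl | hd
      · exact Or.inl (Or.inl hdE)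
      · exact Or.inr (nfA2_diseqs Ω E p d hd hdE)

/-- A family of spines any two members of which are pointwise non-discriminated. -/
def GoodFam (Ω : NormOp) (E : Set (Tm Ty.o)) {σ ρ : Ty} (S : Set (Args σ ρ)) : Prop :=
  ∀ p ∈ S, ∀ q ∈ S, ∃ r : Args2 σ ρ, r.left = p ∧ r.right = q ∧ ¬ ExistsPairHashNf Ω E r

lemma goodFam_singleton_nil (Ω : NormOp) (E : Set (Tm Ty.o)) {σ : Ty} :
    GoodFam Ω E ({Args.nil} : Set (Args σ σ)) := by
  intro p hp q hq
  rcases hp with rfl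
  rcases hq with rfl
  exact ⟨Args2.nil, rfl, rfl, eph_nil Ω E⟩

/-- Extension of a pairwise-non-disequal set of discriminating terms to a discriminant. -/
lemma exists_discriminant (E : Set (Tm Ty.o)) (α : ℕ) (A₀ : Set (Tm (Ty.sort α)))
    (h1 : ∀ u ∈ A₀, Discriminating E u)
    (h2 : ∀ s ∈ A₀, ∀ t ∈ A₀, Tm.Diseq s t ∉ E) :
    ∃ a, IsDiscriminant E α a ∧ A₀ ⊆ a := by
  classical
  set S : Set (Set (Tm (Ty.sort α))) :=
    {b | A₀ ⊆ b ∧ (∀ u ∈ b, Discriminating E u) ∧ ∀ s ∈ b, ∀ t ∈ b, Tm.Diseq s t ∉ E} with hS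
  have hchain : ∀ c ⊆ S, IsChain (· ⊆ ·) c → c.Nonempty → ∃ ub ∈ S, ∀ s ∈ c, s ⊆ ub := by
    rintro c hc hch ⟨b0, hb0⟩
    refine ⟨⋃₀ c, ⟨?_, ?_, ?_⟩, fun s hs => Set.subset_sUnion_of_mem hs⟩
    · exact ((hc hb0).1).trans (Set.subset_sUnion_of_mem hb0)
    · rintro u ⟨b, hb, hub⟩; exact (hc hb).2.1 u hub
    · rintro s ⟨b, hb, hsb⟩ t ⟨b', hb', htb⟩ hst
      rcases hch.total hb hb' with h | h
      · exact (hc hb').2.2 s (h hsb) t htb hst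
      · exact (hc hb).2.2 s hsb t (h htb) hst
  obtain ⟨m, hm0, hmax⟩ := zorn_subset_nonempty S hchain A₀ ⟨subset_rfl, h1, h2⟩
  refine ⟨m, ⟨hmax.prop.2.1, hmax.prop.2.2, ?_⟩, hm0⟩
  intro b hmb hb1 hb2
  have hbS : b ∈ S := ⟨hmax.prop.1.trans hmb, hb1, hb2⟩
  exact le_antisymm (hmax.le_of_ge hbS hmb) hmb

/-- Main mutual induction: (1) two terms with a common possible value are never related by a
disequation on `E` (after normalization); (2) any `GoodFam` family of argument lists applied to
a variable head has a common possible value. -/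
theorem main_lemma (Ω : NormOp) (E : Set (Tm Ty.o)) (hE : Evident Ω E) : ∀ σ : Ty,
    (∀ (a : (sem Ω E σ).1) (u v : Tm σ), (sem Ω E σ).2 u a → (sem Ω E σ).2 v a →
      ¬ hashE E (Ω.nf u) (Ω.nf v)) ∧
    (∀ (σ' : Ty) (x : ℕ) (S : Set (Args σ' σ)), GoodFam Ω E S →
      ∃ a : (sem Ω E σ).1, ∀ p ∈ S, (sem Ω E σ).2 (applyArgs (Tm.var x σ') p) a) := by
  classical
  intro σ
  induction σ with
  | base n =>
    cases n with
    | zero =>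
      constructor
      · intro a u v hu hv hhash
        simp only [sem] at hu hv
        cases a with
        | true =>
          rw [if_pos rfl] at hu hv
          rcases hhash with hd | hd
          · rcases hE.be _ _ hd with ⟨h1, h2⟩ | ⟨h1, h2⟩
            · exact hv h2
            · exact hu h1
          · rcases hE.be _ _ hd with ⟨h1, h2⟩ | ⟨h1, h2⟩
            · exact hu h2
            · exact hv h1
        | false =>
          rw [if_neg Bool.false_ne_true] at hu hv
          rcases hhash with hd | hd
          · rcases hE.be _ _ hd with ⟨h1, h2⟩ | ⟨h1, h2⟩
            · exact hu h1
            · exact hv h2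
          · rcases hE.be _ _ hd with ⟨h1, h2⟩ | ⟨h1, h2⟩
            · exact hv h1
            · exact hu h2
      · intro σ' x S hGF
        by_cases hall : ∀ p ∈ S, Tm.Not (Ω.nf (applyArgs (Tm.var x σ') p)) ∉ E
        · refine ⟨true, fun p hp => ?_⟩
          simp only [sem]
          rw [if_pos trivial]
          exact hall p hp
        · simp only [not_forall, not_not] at hall
          obtain ⟨p₀, hp₀S, hp₀⟩ := hall
          refine ⟨false, fun p hp => ?_⟩
          simp only [sem]
          rw [if_neg Bool.false_ne_true]
          intro hmem
          obtain ⟨r, hl, hr, hne⟩ := hGF p hp p₀ hp₀S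
          apply hne
          have h1 : applyArgs (Tm.var x σ') ((nfA2 Ω r).left) ∈ E := by
            rw [nfA2_left, hl, ← Ω.n3 _ (Atomic.var x σ')]
            exact hmem
          have h2 : Tm.Not (applyArgs (Tm.var x σ') ((nfA2 Ω r).right)) ∈ E := by
            rw [nfA2_right, hr, ← Ω.n3 _ (Atomic.var x σ')]
            exact hp₀
          obtain ⟨d, hd, hdE⟩ := hE.mat x (nfA2 Ω r) h1 h2
          exact nfA2_diseqs Ω E r d hd hdE
    | succ α =>
      constructor
      · intro a u v hu hv hhash
        simp only [sem] at hu hv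
        have du : Discriminating E (Ω.nf u) := by
          rcases hhash with h | h
          · exact ⟨_, Or.inl h⟩
          · exact ⟨_, Or.inr h⟩
        have dv : Discriminating E (Ω.nf v) := by
          rcases hhash with h | h
          · exact ⟨_, Or.inr h⟩
          · exact ⟨_, Or.inl h⟩
        have hu' := hu.2 du
        have hv' := hv.2 dv
        rcases hhash with h | h
        · exact hu.1.2.1 _ hu' _ hv' h
        · exact hu.1.2.1 _ hv' _ hu' h
      · intro σ' x S hGF
        set A₀ : Set (Tm (Ty.sort α)) :=
          {u | (∃ p ∈ S, u = Ω.nf (applyArgs (Tm.var x σ') p)) ∧ Discriminating E u} with hA₀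
        have h1 : ∀ u ∈ A₀, Discriminating E u := fun u hu => hu.2
        have h2 : ∀ s ∈ A₀, ∀ t ∈ A₀, Tm.Diseq s t ∉ E := by
          rintro s ⟨⟨p, hp, rfl⟩, -⟩ t ⟨⟨q, hq, rfl⟩, -⟩ hst
          obtain ⟨r, hl, hr, hne⟩ := hGF p hp q hq
          apply hne
          have hst' : Tm.Diseq (applyArgs (Tm.var x σ') ((nfA2 Ω r).left))
              (applyArgs (Tm.var x σ') ((nfA2 Ω r).right)) ∈ E := by
            rw [nfA2_left, nfA2_right, hl, hr, ← Ω.n3 _ (Atomic.var x σ'),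
              ← Ω.n3 _ (Atomic.var x σ')]
            exact hst
          obtain ⟨d, hd, hdE⟩ := hE.dec x (nfA2 Ω r) hst'
          exact nfA2_diseqs Ω E r d hd hdE
        obtain ⟨a, ha, hsub⟩ := exists_discriminant E α A₀ h1 h2
        refine ⟨a, fun p hp => ?_⟩
        exact ⟨ha, fun hdisc => hsub ⟨⟨p, hp, rfl⟩, hdisc⟩⟩
  | arr μ ν ihμ ihν =>
    constructor
    · intro a u v hu hv hhash
      simp only [sem] at hu hv
      obtain ⟨y, hy⟩ := ihμ.2 μ 0 {Args.nil} (goodFam_singleton_nil Ω E)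
      rcases hhash with hd | hd
      · obtain ⟨z, hz⟩ := hE.fe (Ω.nf u) (Ω.nf v) hd
        rw [Ω.n2, Ω.n2] at hz
        obtain ⟨y, hy⟩ := ihμ.2 μ z {Args.nil} (goodFam_singleton_nil Ω E)
        have hy' : (sem Ω E μ).2 (Tm.var z μ) y := hy Args.nil rfl
        exact ihν.1 (a ⟨y, _, hy'⟩) _ _ (hu _ y hy') (hv _ y hy') (Or.inl hz)
      · obtain ⟨z, hz⟩ := hE.fe (Ω.nf v) (Ω.nf u) hd
        rw [Ω.n2, Ω.n2] at hz
        obtain ⟨y, hy⟩ := ihμ.2 μ z {Args.nil} (goodFam_singleton_nil Ω E)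
        have hy' : (sem Ω E μ).2 (Tm.var z μ) y := hy Args.nil rfl
        exact ihν.1 (a ⟨y, _, hy'⟩) _ _ (hu _ y hy') (hv _ y hy') (Or.inr hz)
    · intro σ' x S hGF
      set T : (sem Ω E μ).1 → Set (Args σ' ν) :=
        fun y => {q | ∃ t : Tm μ, (sem Ω E μ).2 t y ∧ ∃ p ∈ S, q = snocA p t} with hT
      have good : ∀ y, GoodFam Ω E (T y) := by
        rintro y q ⟨t, ht, p, hp, rfl⟩ q' ⟨t', ht', p', hp', rfl⟩
        obtain ⟨r, hl, hr, hne⟩ := hGF p hp p' hp'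
        refine ⟨snocA2 r t t', by rw [snocA2_left, hl], by rw [snocA2_right, hr], ?_⟩
        intro h
        rcases eph_snocA2 Ω E r t t' h with h | h
        · exact hne h
        · exact ihμ.1 y t t' ht ht' h
      have hv : ∀ y, ∃ a : (sem Ω E ν).1,
          ∀ q ∈ T y, (sem Ω E ν).2 (applyArgs (Tm.var x σ') q) a :=
        fun y => ihν.2 σ' x (T y) (good y)
      choose f hf using hv
      refine ⟨fun z => f z.1, fun p hp => ?_⟩
      intro t y h
      have hmem : snocA p t ∈ T y := ⟨t, h, p, hp, rfl⟩
      have := hf y _ hmem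
      rwa [applyArgs_snocA] at this

/-- Admissibility: for every variable `x : σ` there is a possible value
`a ∈ D(σ)` with `x ≈ a`; in particular every `D(σ)` is nonempty. -/
theorem stmt9 (Ω : NormOp) (E : Set (Tm Ty.o)) (hE : Evident Ω E)
    (hnorm : ∀ s ∈ E, Ω.nf s = s) :
    (∀ (x : ℕ) (σ : Ty), ∃ a : (sem Ω E σ).1, (sem Ω E σ).2 (Tm.var x σ) a) ∧
    (∀ σ : Ty, ∃ a : (sem Ω E σ).1, ∃ t : Tm σ, (sem Ω E σ).2 t a) := by
  constructor
  · intro x σ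
    obtain ⟨a, ha⟩ := (main_lemma Ω E hE σ).2 σ x {Args.nil} (goodFam_singleton_nil Ω E)
    exact ⟨a, ha Args.nil rfl⟩
  · intro σ
    obtain ⟨a, ha⟩ := (main_lemma Ω E hE σ).2 σ 0 {Args.nil} (goodFam_singleton_nil Ω E)
    exact ⟨a, Tm.var 0 σ, ha Args.nil rfl⟩
end

section
/- Let E be an evident branch with its value system ≈. If s ≈_σ a, t ≈_σ b, and the equation s =_σ t is in E, then a = b. -/
lemma nf_eqn {σ : Ty} (Ω : NormOp) (s t : Tm σ) :
    Ω.nf (Tm.Eqn s t) = Tm.Eqn (Ω.nf s) (Ω.nf t) :=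
  Ω.n3 (Tm.eq σ) (Atomic.eq σ) (Args.cons s (Args.cons t Args.nil))

lemma eqn_inj {σ : Ty} {s t s' t' : Tm σ} (h : Tm.Eqn s t = Tm.Eqn s' t') :
    s = s' ∧ t = t' := by
  simp only [Tm.Eqn] at h
  injection h with h1 h2 h3 h4
  injection h3 with h5 h6 h7 h8
  exact ⟨h8, h4⟩

lemma semNf (Ω : NormOp) (E : Set (Tm Ty.o)) : ∀ (σ : Ty) (s s' : Tm σ),
    Ω.nf s = Ω.nf s' → ∀ x : (sem Ω E σ).1, (sem Ω E σ).2 s x ↔ (sem Ω E σ).2 s' x := by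
  intro σ
  induction σ with
  | base n =>
    cases n with
    | zero => intro s s' h x; simp [sem, h]
    | succ α => intro s s' h x; simp [sem, h]
  | arr σ τ ihσ ihτ =>
    intro s s' h x
    constructor
    · intro hs t y hy
      exact (ihτ _ _ (by rw [← Ω.n2 s t, ← Ω.n2 s' t, h]) _).mp (hs t y hy)
    · intro hs t y hy
      exact (ihτ _ _ (by rw [← Ω.n2 s t, ← Ω.n2 s' t, h]) _).mpr (hs t y hy)


lemma stmt10_sort (Ω : NormOp) (E : Set (Tm Ty.o)) (hE : Evident Ω E) (α : ℕ)
    (s t : Tm (Ty.sort α)) (a b : Set (Tm (Ty.sort α)))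
    (hsn : Ω.nf s = s) (htn : Ω.nf t = t)
    (hs : IsDiscriminant E α a ∧ (Discriminating E (Ω.nf s) → Ω.nf s ∈ a))
    (ht : IsDiscriminant E α b ∧ (Discriminating E (Ω.nf t) → Ω.nf t ∈ b))
    (hst : Tm.Eqn s t ∈ E) : a = b := by
  obtain ⟨⟨ha1, ha2, ha3⟩, hsa⟩ := hs
  obtain ⟨⟨hb1, hb2, hb3⟩, htb⟩ := ht
  rw [hsn] at hsa
  rw [htn] at htb
  by_cases hD : ∃ u v : Tm (Ty.sort α), Tm.Diseq u v ∈ E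
  · obtain ⟨u, v, huv⟩ := hD
    have hsd : Discriminating E s := by
      rcases hE.con s t u v hst huv with ⟨h1, _⟩ | ⟨h1, _⟩
      · exact ⟨u, Or.inl h1⟩
      · exact ⟨v, Or.inl h1⟩
    have htd : Discriminating E t := by
      rcases hE.con s t u v hst huv with ⟨_, h1⟩ | ⟨_, h1⟩
      · exact ⟨u, Or.inl h1⟩
      · exact ⟨v, Or.inl h1⟩
    have hsa' : s ∈ a := hsa hsd
    have htb' : t ∈ b := htb htd
    have key : ∀ x ∈ a ∪ b, ∀ y ∈ a ∪ b, Tm.Diseq x y ∉ E := by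
      rintro x (hx | hx) y (hy | hy) hxy
      · exact ha2 x hx y hy hxy
      · rcases hE.con s t x y hst hxy with ⟨h1, _⟩ | ⟨_, h2⟩
        · exact ha2 s hsa' x hx h1
        · exact hb2 t htb' y hy h2
      · rcases hE.con s t x y hst hxy with ⟨_, h1⟩ | ⟨h2, _⟩
        · exact hb2 t htb' x hx h1
        · exact ha2 s hsa' y hy h2
      · exact hb2 x hx y hy hxy
    have hdisc : ∀ u ∈ a ∪ b, Discriminating E u := by
      rintro w (hw | hw)
      · exact ha1 w hw
      · exact hb1 w hw
    have hua : a ∪ b = a := ha3 (a ∪ b) Set.subset_union_left hdisc key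
    have hub : a ∪ b = b := hb3 (a ∪ b) Set.subset_union_right hdisc key
    exact hua.symm.trans hub
  · push_neg at hD
    have hea : a = ∅ := by
      rw [Set.eq_empty_iff_forall_notMem]
      intro w hw
      obtain ⟨z, hz | hz⟩ := ha1 w hw
      · exact hD w z hz
      · exact hD z w hz
    have heb : b = ∅ := by
      rw [Set.eq_empty_iff_forall_notMem]
      intro w hw
      obtain ⟨z, hz | hz⟩ := hb1 w hw
      · exact hD w z hz
      · exact hD z w hz
    rw [hea, heb]

/-- Functionality: if `s ≈_σ a`, `t ≈_σ b` and the equation `s = t` is in the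
evident branch `E`, then `a = b`. -/
theorem stmt10 (Ω : NormOp) (E : Set (Tm Ty.o)) (hE : Evident Ω E)
    (hnorm : ∀ s ∈ E, Ω.nf s = s) (σ : Ty) (s t : Tm σ)
    (a b : (sem Ω E σ).1) (hs : (sem Ω E σ).2 s a) (ht : (sem Ω E σ).2 t b)
    (hst : Tm.Eqn s t ∈ E) : a = b := by
  induction σ with
  | base n =>
    have he := hnorm _ hst
    rw [nf_eqn] at he
    obtain ⟨hsn, htn⟩ := eqn_inj he
    cases n with
    | zero =>
      simp only [sem] at hs ht
      rw [hsn] at hs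
      rw [htn] at ht
      rcases hE.bq s t hst with ⟨h1, h2⟩ | ⟨h1, h2⟩ <;>
        cases a <;> cases b <;> simp_all <;> rfl
    | succ α =>
      exact stmt10_sort Ω E hE α s t a b hsn htn hs ht hst
  | arr σ τ ihσ ihτ =>
    refine funext fun z => ?_
    obtain ⟨x, u, hu⟩ := z
    have hu' : (sem Ω E σ).2 (Ω.nf u) x := (semNf Ω E σ (Ω.nf u) u (Ω.n1 u) x).mpr hu
    have h1 := hs (Ω.nf u) x hu'
    have h2 := ht (Ω.nf u) x hu'
    have hfq := hE.fq s t hst (Ω.nf u) (Ω.n1 u)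
    have h1' : (sem Ω E τ).2 (Ω.nf (Tm.app s (Ω.nf u))) (a ⟨x, Ω.nf u, hu'⟩) :=
      (semNf Ω E τ _ _ (Ω.n1 _) _).mpr h1
    have h2' : (sem Ω E τ).2 (Ω.nf (Tm.app t (Ω.nf u))) (b ⟨x, Ω.nf u, hu'⟩) :=
      (semNf Ω E τ _ _ (Ω.n1 _) _).mpr h2
    exact ihτ _ _ _ _ h1' h2' hfq
end
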